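/- Let π be a joint n-type on 𝒴_{[1:T]} × 𝒳 and let x^n ∈ 𝒳^n have type equal to the 𝒳-marginal π_X̄ of π. Then for every S ⊆ [1:T]: ∑_{(y^n_{[1:T]}, ỹ^n_{[1:T]}) ∈ 𝒦_S} 1( y^n_{[1:T]} ∈ 𝒯^n_{π_{Y_{[1:T]}|X̄}}(x^n) and ỹ^n_{[1:T]} ∈ 𝒯^n_{π_{Y_{[1:T]}|X̄}}(x^n) ) ≤ |𝒯^n_{π_{Y_{[1:T]},X̄}}|² / ( |𝒯^n_{π_X̄}| · |𝒯^n_{π_{Y_S,X̄}}| ), where π_{Y_S,X̄} denotes the (𝒴_S × 𝒳)-marginal of π and 𝒯^n_ρ denotes the type class of a joint n-type ρ (the set of sequences whose empirical distribution is ρ). -/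

import Mathlib

open Finset

attribute [local instance] Classical.propDecidable

/-- The conditional type class `𝒯^n_{π_{Y_{[1:T]}|X̄}}(x^n)`. -/
noncomputable def condTypeClass {T n : ℕ} (Y : Fin T → Type*) [∀ i, Fintype (Y i)]
    {𝒳 : Type*} [Fintype 𝒳] (x : Fin n → 𝒳) (π : (∀ i, Y i) × 𝒳 → ℝ) :
    Finset (∀ i, Fin n → Y i) :=
  Finset.univ.filter (fun y => ∀ (ys : ∀ i, Y i) (a : 𝒳),
    π (ys, a) =
      ((Finset.univ.filter (fun t : Fin n => (fun i => y i t) = ys ∧ x t = a)).card : ℝ) / n)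

/-- The joint type class `𝒯^n_{π_{Y_{[1:T]},X̄}}`: pairs of sequences whose joint
empirical distribution is `π`. -/
noncomputable def jointTypeClass {T : ℕ} (n : ℕ) (Y : Fin T → Type*) [∀ i, Fintype (Y i)]
    {𝒳 : Type*} [Fintype 𝒳] (π : (∀ i, Y i) × 𝒳 → ℝ) :
    Finset ((∀ i, Fin n → Y i) × (Fin n → 𝒳)) :=
  Finset.univ.filter (fun w => ∀ (ys : ∀ i, Y i) (a : 𝒳),
    π (ys, a) =
      ((Finset.univ.filter
        (fun t : Fin n => (fun i => w.1 i t) = ys ∧ w.2 t = a)).card : ℝ) / n)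

/-- The type class `𝒯^n_{π_X̄}` of the `𝒳`-marginal of `π`. -/
noncomputable def typeClassX {T : ℕ} (n : ℕ) (Y : Fin T → Type*) [∀ i, Fintype (Y i)]
    {𝒳 : Type*} [Fintype 𝒳] (π : (∀ i, Y i) × 𝒳 → ℝ) : Finset (Fin n → 𝒳) :=
  Finset.univ.filter (fun x : Fin n → 𝒳 => ∀ a : 𝒳,
    (∑ ys : ∀ i, Y i, π (ys, a)) =
      ((Finset.univ.filter (fun t : Fin n => x t = a)).card : ℝ) / n)

/-- The type class `𝒯^n_{π_{Y_S,X̄}}` of the `(𝒴_S × 𝒳)`-marginal of `π`. -/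
noncomputable def typeClassYSX {T : ℕ} (n : ℕ) (Y : Fin T → Type*) [∀ i, Fintype (Y i)]
    {𝒳 : Type*} [Fintype 𝒳] (S : Finset (Fin T)) (π : (∀ i, Y i) × 𝒳 → ℝ) :
    Finset ((∀ i : {i // i ∈ S}, Fin n → Y i) × (Fin n → 𝒳)) :=
  Finset.univ.filter (fun w => ∀ (ysS : ∀ i : {i // i ∈ S}, Y i) (a : 𝒳),
    (∑ ys : ∀ i, Y i, if (∀ i : {i // i ∈ S}, ys i = ysS i) then π (ys, a) else 0) =
      ((Finset.univ.filter
        (fun t : Fin n => (fun i : {i // i ∈ S} => w.1 i t) = ysS ∧ w.2 t = a)).card : ℝ) / n)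


noncomputable def cnt {n : ℕ} {A : Type*} (f : Fin n → A) (a : A) : ℕ :=
  (univ.filter (fun t => f t = a)).card

lemma cnt_eq_sum {n : ℕ} {A : Type*} (f : Fin n → A) (a : A) :
    cnt f a = ∑ t, if f t = a then 1 else 0 := by
  rw [cnt, Finset.card_filter]

lemma sum_cnt_fst {n : ℕ} {A B : Type*} [Fintype A] (f : Fin n → A) (g : Fin n → B) (b : B) :
    ∑ a : A, cnt (fun t => (f t, g t)) (a, b) = cnt g b := by
  simp only [cnt_eq_sum, Prod.mk.injEq]
  rw [Finset.sum_comm]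
  refine Finset.sum_congr rfl (fun t _ => ?_)
  by_cases h : g t = b
  · simp [h, Finset.sum_ite_eq univ (f t) (fun _ => 1)]
  · simp [h]

lemma ite_sum' {P : Prop} [Decidable P] {α β : Type*} [AddCommMonoid β] (s : Finset α)
    (f : α → β) : (if P then ∑ x ∈ s, f x else 0) = ∑ x ∈ s, if P then f x else 0 := by
  split <;> simp_all

lemma sum_cnt_restrict {n : ℕ} {A B C : Type*} [Fintype A] [Fintype B]
    (proj : A → B)
    (f : Fin n → A) (g : Fin n → C) (b : B) (c : C) :
    ∑ a : A, (if proj a = b then cnt (fun t => (f t, g t)) (a, c) else 0) =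
      cnt (fun t => (proj (f t), g t)) (b, c) := by
  simp only [cnt_eq_sum, Prod.mk.injEq, ite_sum']
  rw [Finset.sum_comm]
  refine Finset.sum_congr rfl (fun t _ => ?_)
  have : ∀ a : A, (if proj a = b then if f t = a ∧ g t = c then (1:ℕ) else 0 else 0)
      = if f t = a then (if proj a = b ∧ g t = c then 1 else 0) else 0 := by
    intro a
    by_cases h : f t = a
    · subst h; by_cases h1 : proj (f t) = b <;> by_cases h2 : g t = c <;> simp [h1, h2]
    · rw [if_neg (show ¬(f t = a ∧ g t = c) from fun h' => h h'.1)]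
      simp [h]
  rw [Finset.sum_congr rfl (fun a _ => this a), Finset.sum_ite_eq univ (f t)]
  simp

lemma cnt_comp_perm {n : ℕ} {A : Type*} (f : Fin n → A) (σ : Equiv.Perm (Fin n)) (a : A) :
    cnt (fun t => f (σ t)) a = cnt f a := by
  simp only [cnt_eq_sum]
  exact Fintype.sum_equiv σ _ _ (fun t => rfl)

lemma exists_perm {n : ℕ} {A : Type*} (f g : Fin n → A)
    (h : ∀ a, cnt f a = cnt g a) : ∃ σ : Equiv.Perm (Fin n), ∀ t, f (σ t) = g t := by
  have e : ∀ a : A, {t // g t = a} ≃ {t // f t = a} := by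
    intro a
    apply Fintype.equivOfCardEq
    simp only [Fintype.card_subtype]
    exact (h a).symm
  refine ⟨(Equiv.sigmaFiberEquiv g).symm.trans
    ((Equiv.sigmaCongrRight e).trans (Equiv.sigmaFiberEquiv f)), fun t => ?_⟩
  exact (e (g t) ⟨t, rfl⟩).2

section Main
variable {T n : ℕ} {Y : Fin T → Type*} [∀ i, Fintype (Y i)] {𝒳 : Type*} [Fintype 𝒳]
  (π : (∀ i, Y i) × 𝒳 → ℝ)

/-- The tuple-valued sequence associated to a pair `(y, x)`. -/
noncomputable def Fw (w : (∀ i, Fin n → Y i) × (Fin n → 𝒳)) : Fin n → (∀ i, Y i) × 𝒳 :=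
  fun t => ((fun i => w.1 i t), w.2 t)

lemma memJ_iff (w : (∀ i, Fin n → Y i) × (Fin n → 𝒳)) :
    w ∈ jointTypeClass n Y π ↔ ∀ p : (∀ i, Y i) × 𝒳, π p = (cnt (Fw w) p : ℝ) / n := by
  simp only [jointTypeClass, mem_filter, mem_univ, true_and, Prod.forall, cnt, Fw,
    Prod.mk.injEq]

lemma memCond_iff (x : Fin n → 𝒳) (y : ∀ i, Fin n → Y i) :
    y ∈ condTypeClass Y x π ↔ (y, x) ∈ jointTypeClass n Y π := by
  simp only [condTypeClass, jointTypeClass, mem_filter, mem_univ, true_and]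

lemma memX_iff (x : Fin n → 𝒳) :
    x ∈ typeClassX n Y π ↔ ∀ a : 𝒳, (∑ ys : ∀ i, Y i, π (ys, a)) = (cnt x a : ℝ) / n := by
  simp only [typeClassX, mem_filter, mem_univ, true_and, cnt]

variable (S : Finset (Fin T))

/-- Restriction of an index-tuple to `S`, paired with the `𝒳`-component. -/
noncomputable def projK (w : (∀ i, Fin n → Y i) × (Fin n → 𝒳)) :
    (∀ i : {i // i ∈ S}, Fin n → Y i) × (Fin n → 𝒳) :=
  ((fun i => w.1 i), w.2)

/-- The tuple-valued sequence associated to an element of the `(𝒴_S × 𝒳)` world. -/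
noncomputable def FK (k : (∀ i : {i // i ∈ S}, Fin n → Y i) × (Fin n → 𝒳)) :
    Fin n → (∀ i : {i // i ∈ S}, Y i) × 𝒳 :=
  fun t => ((fun i => k.1 i t), k.2 t)

lemma memK_iff (k : (∀ i : {i // i ∈ S}, Fin n → Y i) × (Fin n → 𝒳)) :
    k ∈ typeClassYSX n Y S π ↔ ∀ (ysS : ∀ i : {i // i ∈ S}, Y i) (a : 𝒳),
      (∑ ys : ∀ i, Y i, if (∀ i : {i // i ∈ S}, ys i = ysS i) then π (ys, a) else 0) =
        (cnt (FK S k) (ysS, a) : ℝ) / n := by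
  simp only [typeClassYSX, mem_filter, mem_univ, true_and, cnt, FK, Prod.mk.injEq]

variable {π S}

lemma memJ_snd_memX {w : (∀ i, Fin n → Y i) × (Fin n → 𝒳)}
    (hw : w ∈ jointTypeClass n Y π) : w.2 ∈ typeClassX n Y π := by
  rw [memJ_iff] at hw
  rw [memX_iff]
  intro a
  have h1 : ∑ ys : ∀ i, Y i, π (ys, a)
      = ((∑ ys : ∀ i, Y i, cnt (Fw w) (ys, a) : ℕ) : ℝ) / n := by
    rw [Finset.sum_congr rfl (fun ys _ => hw (ys, a))]
    push_cast
    rw [Finset.sum_div]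
  have h2 : (∑ ys : ∀ i, Y i, cnt (Fw w) (ys, a)) = cnt w.2 a :=
    sum_cnt_fst (fun t => fun i => w.1 i t) w.2 a
  rw [h1, h2]

lemma memJ_projK_memK {w : (∀ i, Fin n → Y i) × (Fin n → 𝒳)}
    (hw : w ∈ jointTypeClass n Y π) : projK S w ∈ typeClassYSX n Y S π := by
  rw [memJ_iff] at hw
  rw [memK_iff]
  intro ysS a
  have h1 : ∀ ys : ∀ i, Y i,
      (if (∀ i : {i // i ∈ S}, ys i = ysS i) then π (ys, a) else 0)
      = ((if (fun i : {i // i ∈ S} => ys i) = ysS then cnt (Fw w) (ys, a) else 0 : ℕ) : ℝ) / n := by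
    intro ys
    have hiff : (∀ i : {i // i ∈ S}, ys i = ysS i) ↔ (fun i : {i // i ∈ S} => ys i) = ysS :=
      (funext_iff).symm
    by_cases hy : (fun i : {i // i ∈ S} => ys i) = ysS
    · rw [if_pos (hiff.2 hy), if_pos hy, hw (ys, a)]
    · rw [if_neg (fun h => hy (hiff.1 h)), if_neg hy]
      simp
  have h2 : (∑ ys : ∀ i, Y i,
      if (fun i : {i // i ∈ S} => ys i) = ysS then cnt (Fw w) (ys, a) else 0)
      = cnt (FK S (projK S w)) (ysS, a) := by
    have h := sum_cnt_restrict (fun (ys : ∀ i, Y i) => (fun i : {i // i ∈ S} => ys i))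
      (fun t => fun i => w.1 i t) w.2 ysS a
    convert h using 2 with ys _
    by_cases hc : (fun i : {i // i ∈ S} => ys i) = ysS
    · rw [if_pos hc, if_pos hc]
      rfl
    · rw [if_neg hc, if_neg hc]
    rfl
  rw [Finset.sum_congr rfl (fun ys _ => h1 ys), ← Finset.sum_div, ← Nat.cast_sum, h2]

lemma cnt_J_eq (hn : (n : ℝ) ≠ 0) {w w' : (∀ i, Fin n → Y i) × (Fin n → 𝒳)}
    (hw : w ∈ jointTypeClass n Y π) (hw' : w' ∈ jointTypeClass n Y π)
    (p : (∀ i, Y i) × 𝒳) : cnt (Fw w) p = cnt (Fw w') p := by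
  have h1 := (memJ_iff π w).1 hw p
  have h2 := (memJ_iff π w').1 hw' p
  rw [h1] at h2
  field_simp at h2
  exact_mod_cast h2

lemma cnt_X_eq (hn : (n : ℝ) ≠ 0) {x₁ x₂ : Fin n → 𝒳}
    (h1 : x₁ ∈ typeClassX n Y π) (h2 : x₂ ∈ typeClassX n Y π) (a : 𝒳) :
    cnt x₁ a = cnt x₂ a := by
  have g1 := (memX_iff π x₁).1 h1 a
  have g2 := (memX_iff π x₂).1 h2 a
  rw [g1] at g2
  field_simp at g2
  exact_mod_cast g2

lemma cnt_K_eq (hn : (n : ℝ) ≠ 0) {k₁ k₂ : (∀ i : {i // i ∈ S}, Fin n → Y i) × (Fin n → 𝒳)}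
    (h1 : k₁ ∈ typeClassYSX n Y S π) (h2 : k₂ ∈ typeClassYSX n Y S π)
    (p : (∀ i : {i // i ∈ S}, Y i) × 𝒳) : cnt (FK S k₁) p = cnt (FK S k₂) p := by
  have g1 := (memK_iff π S k₁).1 h1 p.1 p.2
  have g2 := (memK_iff π S k₂).1 h2 p.1 p.2
  rw [g1] at g2
  field_simp at g2
  exact_mod_cast g2

/-- Composing a pair with a permutation of positions. -/
noncomputable def permW (σ : Equiv.Perm (Fin n)) (w : (∀ i, Fin n → Y i) × (Fin n → 𝒳)) :
    (∀ i, Fin n → Y i) × (Fin n → 𝒳) :=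
  ((fun i t => w.1 i (σ t)), fun t => w.2 (σ t))

lemma Fw_permW (σ : Equiv.Perm (Fin n)) (w : (∀ i, Fin n → Y i) × (Fin n → 𝒳)) (t : Fin n) :
    Fw (T := T) (permW σ w) t = Fw w (σ t) := rfl

lemma permW_memJ (σ : Equiv.Perm (Fin n)) {w : (∀ i, Fin n → Y i) × (Fin n → 𝒳)}
    (hw : w ∈ jointTypeClass n Y π) : permW σ w ∈ jointTypeClass n Y π := by
  rw [memJ_iff] at hw ⊢
  intro p
  have : cnt (Fw (T := T) (permW σ w)) p = cnt (Fw w) p := cnt_comp_perm (Fw w) σ p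
  rw [this]
  exact hw p

lemma permW_permW (σ : Equiv.Perm (Fin n)) (w : (∀ i, Fin n → Y i) × (Fin n → 𝒳)) :
    permW (T := T) σ.symm (permW σ w) = w := by
  unfold permW
  simp

lemma permW_permW' (σ : Equiv.Perm (Fin n)) (w : (∀ i, Fin n → Y i) × (Fin n → 𝒳)) :
    permW (T := T) σ (permW σ.symm w) = w := by
  unfold permW
  simp

lemma card_fiberX_eq (hn : (n : ℝ) ≠ 0) {x₁ x₂ : Fin n → 𝒳}
    (h1 : x₁ ∈ typeClassX n Y π) (h2 : x₂ ∈ typeClassX n Y π) :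
    ((jointTypeClass n Y π).filter (fun w => w.2 = x₁)).card
      = ((jointTypeClass n Y π).filter (fun w => w.2 = x₂)).card := by
  obtain ⟨σ, hσ⟩ := exists_perm x₁ x₂ (fun a => cnt_X_eq hn h1 h2 a)
  refine Finset.card_bij' (fun w _ => permW σ w) (fun w _ => permW σ.symm w) ?_ ?_ ?_ ?_
  · intro w hw
    rw [mem_filter] at hw ⊢
    refine ⟨permW_memJ σ hw.1, funext fun t => ?_⟩
    show w.2 (σ t) = x₂ t
    rw [hw.2, hσ t]
  · intro w hw
    rw [mem_filter] at hw ⊢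
    refine ⟨permW_memJ σ.symm hw.1, funext fun t => ?_⟩
    show w.2 (σ.symm t) = x₁ t
    rw [hw.2, ← hσ (σ.symm t), Equiv.apply_symm_apply]
  · intro w _
    exact permW_permW σ w
  · intro w _
    exact permW_permW' σ w

lemma card_fiberK_eq (hn : (n : ℝ) ≠ 0)
    {k₁ k₂ : (∀ i : {i // i ∈ S}, Fin n → Y i) × (Fin n → 𝒳)}
    (h1 : k₁ ∈ typeClassYSX n Y S π) (h2 : k₂ ∈ typeClassYSX n Y S π) :
    ((jointTypeClass n Y π).filter (fun w => projK S w = k₁)).card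
      = ((jointTypeClass n Y π).filter (fun w => projK S w = k₂)).card := by
  obtain ⟨σ, hσ⟩ := exists_perm (FK S k₁) (FK S k₂) (fun p => cnt_K_eq hn h1 h2 p)
  have hσ1 : ∀ (i : {i // i ∈ S}) (t : Fin n), k₁.1 i (σ t) = k₂.1 i t :=
    fun i t => congrFun (congrArg Prod.fst (hσ t)) i
  have hσ2 : ∀ t : Fin n, k₁.2 (σ t) = k₂.2 t := fun t => congrArg Prod.snd (hσ t)
  have hτ1 : ∀ (i : {i // i ∈ S}) (t : Fin n), k₂.1 i (σ.symm t) = k₁.1 i t := by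
    intro i t
    have := hσ1 i (σ.symm t)
    rw [Equiv.apply_symm_apply] at this
    exact this.symm
  have hτ2 : ∀ t : Fin n, k₂.2 (σ.symm t) = k₁.2 t := by
    intro t
    have := hσ2 (σ.symm t)
    rw [Equiv.apply_symm_apply] at this
    exact this.symm
  refine Finset.card_bij' (fun w _ => permW σ w) (fun w _ => permW σ.symm w) ?_ ?_ ?_ ?_
  · intro w hw
    rw [mem_filter] at hw ⊢
    refine ⟨permW_memJ σ hw.1, ?_⟩
    have hp1 : ∀ i : {i // i ∈ S}, w.1 i = k₁.1 i :=
      fun i => congrFun (congrArg Prod.fst hw.2) i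
    have hp2 : w.2 = k₁.2 := congrArg Prod.snd hw.2
    refine Prod.ext (funext fun i => funext fun t => ?_) (funext fun t => ?_)
    · show w.1 i (σ t) = k₂.1 i t
      rw [congrFun (hp1 i) (σ t), hσ1 i t]
    · show w.2 (σ t) = k₂.2 t
      rw [congrFun hp2 (σ t), hσ2 t]
  · intro w hw
    rw [mem_filter] at hw ⊢
    refine ⟨permW_memJ σ.symm hw.1, ?_⟩
    have hp1 : ∀ i : {i // i ∈ S}, w.1 i = k₂.1 i :=
      fun i => congrFun (congrArg Prod.fst hw.2) i
    have hp2 : w.2 = k₂.2 := congrArg Prod.snd hw.2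
    refine Prod.ext (funext fun i => funext fun t => ?_) (funext fun t => ?_)
    · show w.1 i (σ.symm t) = k₁.1 i t
      rw [congrFun (hp1 i) (σ.symm t), hτ1 i t]
    · show w.2 (σ.symm t) = k₁.2 t
      rw [congrFun hp2 (σ.symm t), hτ2 t]
  · intro w _
    exact permW_permW σ w
  · intro w _
    exact permW_permW' σ w

end Main

/-- For a joint n-type `π` on `𝒴_{[1:T]} × 𝒳` and `x^n` of type `π_X̄`,
for every `S ⊆ [1:T]`:
`#{(y,ỹ) ∈ 𝒦_S : y,ỹ ∈ 𝒯^n_{π_{Y|X̄}}(x^n)} ≤ |𝒯^n_{π_{Y,X̄}}|² / (|𝒯^n_{π_X̄}|·|𝒯^n_{π_{Y_S,X̄}}|)`. -/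
theorem stmt_10 {T n : ℕ} (Y : Fin T → Type*) [∀ i, Fintype (Y i)]
    {𝒳 : Type*} [Fintype 𝒳]
    (π : (∀ i, Y i) × 𝒳 → ℝ)
    (hπ0 : ∀ w, 0 ≤ π w) (hπ1 : ∑ w, π w = 1)
    (hπtype : ∀ w, ∃ k : ℕ, k ≤ n ∧ π w = (k : ℝ) / n)
    (x : Fin n → 𝒳)
    (hx : ∀ a : 𝒳, ∑ ys : ∀ i, Y i, π (ys, a) =
      ((Finset.univ.filter (fun t : Fin n => x t = a)).card : ℝ) / n)
    (S : Finset (Fin T)) :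
    ((Finset.univ.filter
        (fun w : (∀ i, Fin n → Y i) × (∀ i, Fin n → Y i) =>
          (∀ i ∈ S, w.1 i = w.2 i) ∧ (∀ i ∉ S, w.1 i ≠ w.2 i) ∧
            w.1 ∈ condTypeClass Y x π ∧ w.2 ∈ condTypeClass Y x π)).card : ℝ) ≤
      ((jointTypeClass n Y π).card : ℝ) ^ 2 /
        (((typeClassX n Y π).card : ℝ) * ((typeClassYSX n Y S π).card : ℝ)) := by
  classical
  -- n ≠ 0
  have hn : (n : ℝ) ≠ 0 := by
    intro h0
    have hz : ∀ a : 𝒳, ∑ ys : ∀ i, Y i, π (ys, a) = 0 := by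
      intro a
      rw [hx a, h0, div_zero]
    have hs : ∑ w : (∀ i, Y i) × 𝒳, π w = 0 := by
      rw [Fintype.sum_prod_type, Finset.sum_comm]
      exact Finset.sum_eq_zero (fun a _ => hz a)
    rw [hπ1] at hs
    exact one_ne_zero hs
  have hxX : x ∈ typeClassX n Y π := by
    rw [memX_iff]
    intro a
    rw [hx a]
    rfl
  set J := jointTypeClass n Y π with hJ
  set XC := typeClassX n Y π with hXC
  set K := typeClassYSX n Y S π with hK
  set L := (Finset.univ.filter
      (fun w : (∀ i, Fin n → Y i) × (∀ i, Fin n → Y i) =>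
        (∀ i ∈ S, w.1 i = w.2 i) ∧ (∀ i ∉ S, w.1 i ≠ w.2 i) ∧
          w.1 ∈ condTypeClass Y x π ∧ w.2 ∈ condTypeClass Y x π)) with hL
  rcases L.eq_empty_or_nonempty with hLe | ⟨⟨y₀, yt₀⟩, hw₀⟩
  · rw [hLe]
    simp only [Finset.card_empty, Nat.cast_zero]
    apply div_nonneg (by positivity) (by positivity)
  · rw [hL, mem_filter] at hw₀
    have hy₀ : y₀ ∈ condTypeClass Y x π := hw₀.2.2.2.1
    have hw0J : (y₀, x) ∈ J := (memCond_iff π x y₀).1 hy₀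
    set k₀ := projK S (y₀, x) with hk₀def
    have hk₀ : k₀ ∈ K := memJ_projK_memK hw0J
    set c := (condTypeClass Y x π).card with hc
    set m := (J.filter (fun w => projK S w = k₀)).card with hm
    -- fiber over x inside J equals the conditional type class
    have hfibx : ∀ x' ∈ XC, (J.filter (fun w => w.2 = x')).card = c := by
      intro x' hx'
      rw [card_fiberX_eq hn hx' hxX]
      rw [hc]
      refine Finset.card_bij' (fun w _ => w.1) (fun y _ => (y, x)) ?_ ?_ ?_ ?_
      · intro w hw
        rw [mem_filter] at hw
        rw [memCond_iff]
        have he : (w.1, x) = w := Prod.ext rfl hw.2.symm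
        rw [he]
        exact hw.1
      · intro y hy
        rw [mem_filter]
        exact ⟨(memCond_iff π x y).1 hy, rfl⟩
      · intro w hw
        rw [mem_filter] at hw
        exact Prod.ext rfl hw.2.symm
      · intro y _
        rfl
    have claim1 : J.card = XC.card * c := by
      rw [Finset.card_eq_sum_card_fiberwise (fun w hw => memJ_snd_memX hw)]
      rw [Finset.sum_congr rfl (fun x' hx' => hfibx x' hx'), Finset.sum_const, smul_eq_mul]
    have claim2 : J.card = K.card * m := by
      rw [Finset.card_eq_sum_card_fiberwise (fun w hw => memJ_projK_memK hw)]
      rw [Finset.sum_congr rfl (fun k hk => card_fiberK_eq hn hk hk₀), Finset.sum_const,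
        smul_eq_mul]
    -- bound the left-hand side
    have claim3 : L.card ≤ c * m := by
      have hL1 : ∀ w ∈ L, w.1 ∈ condTypeClass Y x π := by
        intro w hw
        rw [hL, mem_filter] at hw
        exact hw.2.2.2.1
      rw [Finset.card_eq_sum_card_fiberwise hL1]
      have hbound : ∀ y ∈ condTypeClass Y x π,
          (L.filter (fun w => w.1 = y)).card ≤ m := by
        intro y hy
        have hyJ : (y, x) ∈ J := (memCond_iff π x y).1 hy
        have hfib := card_fiberK_eq hn (memJ_projK_memK hyJ) hk₀
        rw [hm, ← hfib]
        apply Finset.card_le_card_of_injOn (fun w => (w.2, x))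
        · intro w hw
          rw [Finset.mem_coe, mem_filter] at hw
          obtain ⟨hwL, hwy⟩ := hw
          rw [hL, mem_filter] at hwL
          obtain ⟨-, hS, -, -, hc2⟩ := hwL
          rw [Finset.mem_coe, mem_filter]
          refine ⟨(memCond_iff π x w.2).1 hc2, ?_⟩
          show ((fun i : {i // i ∈ S} => w.2 i), x) = ((fun i : {i // i ∈ S} => y i), x)
          refine Prod.ext (funext fun i => ?_) rfl
          show w.2 i = y i
          rw [← hS i i.2, hwy]
        · intro w hw w' hw' he
          simp only [Finset.mem_coe, Finset.mem_filter] at hw hw'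
          have h2 : w.2 = w'.2 := congrArg Prod.fst he
          have h1 : w.1 = w'.1 := by rw [hw.2, hw'.2]
          exact Prod.ext h1 h2
      calc (∑ y ∈ condTypeClass Y x π, (L.filter (fun w => w.1 = y)).card)
          ≤ ∑ _y ∈ condTypeClass Y x π, m := Finset.sum_le_sum hbound
        _ = c * m := by rw [Finset.sum_const, smul_eq_mul]
    -- positivity of denominators
    have hXpos : 0 < XC.card := Finset.card_pos.2 ⟨x, hxX⟩
    have hKpos : 0 < K.card := Finset.card_pos.2 ⟨k₀, hk₀⟩
    have hrhs : ((J.card : ℝ)) ^ 2 / ((XC.card : ℝ) * (K.card : ℝ)) = (c : ℝ) * m := by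
      rw [pow_two]
      nth_rewrite 1 [claim1]
      nth_rewrite 1 [claim2]
      push_cast
      have hX0 : (XC.card : ℝ) ≠ 0 := Nat.cast_ne_zero.2 hXpos.ne'
      have hK0 : (K.card : ℝ) ≠ 0 := Nat.cast_ne_zero.2 hKpos.ne'
      field_simp
    rw [hrhs]
    calc (L.card : ℝ) ≤ ((c * m : ℕ) : ℝ) := Nat.cast_le.2 claim3
      _ = (c : ℝ) * m := by push_cast; ring
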